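/- Let p be a prime and (a,b,c) integers. For each integer n, the number of triples (h, x, y) with 0 ≤ h < p, x ≡ 0 (mod p), y not ≡ 0 (mod p), and ax² + (b+2ah)xy + (ah²+bh+c)y² = n equals the number of pairs (x, y) ∈ ℤ² with y not ≡ 0 (mod p) and ax² + bxy + cy² = n. -/

import Mathlib

theorem stmt_8 (p : ℕ) (hp : p.Prime) (a b c : ℤ) (n : ℤ) :
    Nat.card {t : ℤ × ℤ × ℤ //
        0 ≤ t.1 ∧ t.1 < p ∧ (p : ℤ) ∣ t.2.1 ∧ ¬ (p : ℤ) ∣ t.2.2 ∧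
        a * t.2.1 ^ 2 + (b + 2 * a * t.1) * t.2.1 * t.2.2 +
          (a * t.1 ^ 2 + b * t.1 + c) * t.2.2 ^ 2 = n} =
      Nat.card {v : ℤ × ℤ //
        ¬ (p : ℤ) ∣ v.2 ∧ a * v.1 ^ 2 + b * v.1 * v.2 + c * v.2 ^ 2 = n} := by
  haveI : Fact p.Prime := ⟨hp⟩
  apply Nat.card_congr
  refine
    { toFun := fun t => ⟨(t.1.2.1 + t.1.1 * t.1.2.2, t.1.2.2), ?_⟩
      invFun := fun v =>
        ⟨(((((v.1.1 : ZMod p) * (v.1.2 : ZMod p)⁻¹).val : ℕ) : ℤ),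
          v.1.1 - (((v.1.1 : ZMod p) * (v.1.2 : ZMod p)⁻¹).val : ℤ) * v.1.2, v.1.2), ?_⟩
      left_inv := ?_
      right_inv := ?_ }
  · obtain ⟨⟨h, x, y⟩, h0, hlt, hx, hy, heq⟩ := t
    refine ⟨hy, ?_⟩
    simp only at *
    linear_combination heq
  · obtain ⟨⟨x, y⟩, hy, heq⟩ := v
    simp only at *
    set h : ℤ := ((((x : ZMod p) * (y : ZMod p)⁻¹).val : ℕ) : ℤ) with hdef
    have hylt : ((x : ZMod p) * (y : ZMod p)⁻¹).val < p := ZMod.val_lt _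
    refine ⟨Int.ofNat_nonneg _, by rw [hdef]; exact_mod_cast hylt, ?_, hy, ?_⟩
    · have hy0 : (y : ZMod p) ≠ 0 := by
        rwa [Ne, ZMod.intCast_zmod_eq_zero_iff_dvd]
      rw [← ZMod.intCast_zmod_eq_zero_iff_dvd]
      push_cast [hdef]
      rw [ZMod.natCast_val, ZMod.cast_id]
      field_simp
      ring
    · ring_nf
      ring_nf at heq
      linarith [heq]
  · rintro ⟨⟨h, x, y⟩, h0, hlt, hx, hy, heq⟩
    simp only at h0 hlt hx hy heq
    simp only [Subtype.mk.injEq, Prod.mk.injEq]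
    have hy0 : (y : ZMod p) ≠ 0 := by
      rwa [Ne, ZMod.intCast_zmod_eq_zero_iff_dvd]
    have hx0 : (x : ZMod p) = 0 := by
      rwa [ZMod.intCast_zmod_eq_zero_iff_dvd]
    have key : (((x + h * y : ℤ) : ZMod p) * (y : ZMod p)⁻¹) = ((h : ℤ) : ZMod p) := by
      push_cast
      rw [hx0]
      field_simp
      ring
    have hval : ((((x + h * y : ℤ) : ZMod p) * (y : ZMod p)⁻¹).val : ℤ) = h := by
      rw [key]
      have : ((h : ℤ) : ZMod p) = ((h.toNat : ℕ) : ZMod p) := by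
        rw [← Int.toNat_of_nonneg h0]
        push_cast
        rfl
      rw [this, ZMod.val_natCast_of_lt (by omega : h.toNat < p)]
      omega
    refine ⟨hval, ?_, trivial⟩
    rw [hval]; ring
  · rintro ⟨⟨x, y⟩, hy, heq⟩
    simp only [Subtype.mk.injEq, Prod.mk.injEq]
    exact ⟨by ring, trivial⟩
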